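/- The operator ∇⁰_Y is compatible with the module-valued inner product: for Schwartz functions f, g one has ⟨∇⁰_Y f, g⟩ + ⟨f, ∇⁰_Y g⟩ = δ_Y(⟨f,g⟩), where ⟨f,g⟩(x,y,p) = Σ_k e(-ckp(y-pν)) f(x+k,y) conj(g(x-2pμ+k, y-2pν)), (∇⁰_Y f)(x,y) = -∂f/∂y(x,y) + (πci/(2μ)) x² f(x,y), and (δ_Y ψ)(x,y,p) = -∂ψ/∂y(x,y,p) + 2πi c p (x-pμ) ψ(x,y,p). -/

import Mathlib

open Real

noncomputable def ip (c : ℕ) (μ ν : ℝ) (f g : ℝ → ℝ → ℂ) (x y : ℝ) (p : ℤ) : ℂ :=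
  ∑' k : ℤ, Complex.exp (2 * (π : ℂ) * Complex.I *
      (-((c : ℂ) * (k : ℂ) * (p : ℂ) * ((y : ℂ) - (p : ℂ) * (ν : ℂ)))))
    * f (x + k) y * (starRingEnd ℂ) (g (x - 2 * p * μ + k) (y - 2 * p * ν))

noncomputable def nablaY (c : ℕ) (μ : ℝ) (f : ℝ → ℝ → ℂ) (x y : ℝ) : ℂ :=
  -deriv (fun t => f x t) y + (π : ℂ) * (c : ℂ) * Complex.I / (2 * (μ : ℂ)) * (x : ℂ) ^ 2 * f x y

noncomputable def deltaY (c : ℕ) (μ : ℝ) (φ : ℝ → ℝ → ℤ → ℂ) (x y : ℝ) (p : ℤ) : ℂ :=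
  -deriv (fun t => φ x t p) y
    + 2 * (π : ℂ) * Complex.I * (c : ℂ) * (p : ℂ) * ((x : ℂ) - (p : ℂ) * (μ : ℂ)) * φ x y p

/-! ### Auxiliary machinery -/

/-- decay bound for a 2D Schwartz map, uniform in second variable. -/
lemma schwartz_decay (h : SchwartzMap (ℝ × ℝ) ℂ) : ∃ C : ℝ, 0 ≤ C ∧ ∀ a t : ℝ,
    ‖h (a, t)‖ ≤ C / (1 + |a|) ^ 5 ∧
      ‖fderiv ℝ h ((a, t) : ℝ × ℝ) ((0 : ℝ), (1 : ℝ))‖ ≤ C / (1 + |a|) ^ 5 := by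
  refine ⟨2 ^ 5 * ((Finset.Iic ((5 : ℕ), (1 : ℕ))).sup
      (fun m => SchwartzMap.seminorm ℝ m.1 m.2)) h, by positivity, fun a t => ?_⟩
  have hle : (1 + |a|) ≤ 1 + ‖((a, t) : ℝ × ℝ)‖ := by
    have : |a| ≤ ‖((a, t) : ℝ × ℝ)‖ := by
      simpa [Real.norm_eq_abs] using norm_fst_le ((a, t) : ℝ × ℝ)
    linarith
  have hpos : (0 : ℝ) < (1 + |a|) ^ 5 := by positivity
  constructor
  · have h0 := SchwartzMap.one_add_le_sup_seminorm_apply (𝕜 := ℝ) (m := ((5 : ℕ), (1 : ℕ)))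
      (k := 5) (n := 0) le_rfl (by norm_num) h ((a, t) : ℝ × ℝ)
    rw [norm_iteratedFDeriv_zero] at h0
    rw [le_div_iff₀ hpos]
    calc ‖h (a, t)‖ * (1 + |a|) ^ 5 = (1 + |a|) ^ 5 * ‖h (a, t)‖ := by ring
      _ ≤ (1 + ‖((a, t) : ℝ × ℝ)‖) ^ 5 * ‖h (a, t)‖ := by gcongr
      _ ≤ _ := h0
  · have h1 := SchwartzMap.one_add_le_sup_seminorm_apply (𝕜 := ℝ) (m := ((5 : ℕ), (1 : ℕ)))
      (k := 5) (n := 1) le_rfl le_rfl h ((a, t) : ℝ × ℝ)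
    have hfd : ‖fderiv ℝ h ((a, t) : ℝ × ℝ) ((0 : ℝ), (1 : ℝ))‖
        ≤ ‖iteratedFDeriv ℝ 1 h ((a, t) : ℝ × ℝ)‖ := by
      have hn : ‖((0 : ℝ), (1 : ℝ))‖ = 1 := by simp [Prod.norm_def]
      calc ‖fderiv ℝ h ((a, t) : ℝ × ℝ) ((0 : ℝ), (1 : ℝ))‖
          ≤ ‖fderiv ℝ h ((a, t) : ℝ × ℝ)‖ * ‖((0 : ℝ), (1 : ℝ))‖ :=
            ContinuousLinearMap.le_opNorm _ _
        _ = ‖fderiv ℝ h ((a, t) : ℝ × ℝ)‖ := by rw [hn, mul_one]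
        _ = ‖iteratedFDeriv ℝ 1 h ((a, t) : ℝ × ℝ)‖ := by
            rw [← norm_iteratedFDeriv_fderiv, norm_iteratedFDeriv_zero]
    rw [le_div_iff₀ hpos]
    calc ‖fderiv ℝ h ((a, t) : ℝ × ℝ) ((0 : ℝ), (1 : ℝ))‖ * (1 + |a|) ^ 5
        = (1 + |a|) ^ 5 * ‖fderiv ℝ h ((a, t) : ℝ × ℝ) ((0 : ℝ), (1 : ℝ))‖ := by ring
      _ ≤ (1 + ‖((a, t) : ℝ × ℝ)‖) ^ 5 * ‖iteratedFDeriv ℝ 1 h ((a, t) : ℝ × ℝ)‖ := by gcongr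
      _ ≤ _ := h1

lemma summable_aux (x : ℝ) : Summable (fun k : ℤ => (1 + |(k : ℝ)|) / (1 + |x + k|) ^ 3) := by
  have hnat : Summable (fun n : ℕ => 1 / (1 + (n : ℝ)) ^ 2) := by
    have h2 : Summable (fun n : ℕ => 1 / ((n : ℝ)) ^ 2) := summable_one_div_nat_pow.mpr one_lt_two
    have := (summable_nat_add_iff (f := fun n : ℕ => 1 / (n : ℝ) ^ 2) 1).mpr h2
    refine this.congr fun n => by push_cast; ring_nf
  have hz : Summable (fun k : ℤ => 1 / (1 + |(k : ℝ)|) ^ 2) := by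
    apply Summable.of_nat_of_neg
    · exact hnat.congr fun n => by simp [abs_of_nonneg (n.cast_nonneg : (0:ℝ) ≤ n)]
    · exact hnat.congr fun n => by push_cast; simp [abs_of_nonneg (n.cast_nonneg : (0:ℝ) ≤ n)]
  have hb : Summable (fun k : ℤ => (1 + |x|) ^ 3 * (1 / (1 + |(k : ℝ)|) ^ 2)) := hz.mul_left _
  refine Summable.of_nonneg_of_le (fun k => by positivity) (fun k => ?_) hb
  have hk : (1 : ℝ) + |(k : ℝ)| ≤ (1 + |x|) * (1 + |x + k|) := by
    have h1 : |(k : ℝ)| ≤ |x + k| + |x| := by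
      have := abs_sub (x + (k : ℝ)) x
      simpa using this
    nlinarith [abs_nonneg x, abs_nonneg (x + (k : ℝ)), abs_nonneg ((k : ℝ))]
  rw [mul_one_div, div_le_div_iff₀ (by positivity) (by positivity)]
  calc (1 + |(k : ℝ)|) * (1 + |(k : ℝ)|) ^ 2 = (1 + |(k : ℝ)|) ^ 3 := by ring
    _ ≤ ((1 + |x|) * (1 + |x + k|)) ^ 3 := by
        apply pow_le_pow_left₀ (by positivity) hk
    _ = (1 + |x|) ^ 3 * (1 + |x + k|) ^ 3 := by ring

lemma summable_of_le_aux {x M : ℝ} {v : ℤ → ℂ}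
    (hv : ∀ k : ℤ, ‖v k‖ ≤ M * ((1 + |(k : ℝ)|) / (1 + |x + k|) ^ 3)) : Summable v :=
  Summable.of_norm_bounded ((summable_aux x).mul_left M) hv

noncomputable def D1 (h : SchwartzMap (ℝ × ℝ) ℂ) (s t : ℝ) : ℂ :=
  fderiv ℝ h ((s, t) : ℝ × ℝ) ((0 : ℝ), (1 : ℝ))

lemma hasDerivAt_slice (h : SchwartzMap (ℝ × ℝ) ℂ) (s t : ℝ) :
    HasDerivAt (fun r => h (s, r)) (D1 h s t) t := by
  have hc : HasDerivAt (fun r : ℝ => ((s, r) : ℝ × ℝ)) (((0 : ℝ), (1 : ℝ)) : ℝ × ℝ) t :=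
    (hasDerivAt_const t s).prodMk (hasDerivAt_id t)
  exact (h.differentiableAt.hasFDerivAt).comp_hasDerivAt t hc

lemma deriv_slice (h : SchwartzMap (ℝ × ℝ) ℂ) (s t : ℝ) :
    deriv (fun r => h (s, r)) t = D1 h s t := (hasDerivAt_slice h s t).deriv

lemma nabla_eq (c : ℕ) (μ : ℝ) (h : SchwartzMap (ℝ × ℝ) ℂ) (s t : ℝ) :
    nablaY c μ (fun a b => h (a, b)) s t
      = -D1 h s t + (π : ℂ) * (c : ℂ) * Complex.I / (2 * (μ : ℂ)) * (s : ℂ) ^ 2 * h (s, t) := by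
  rw [nablaY, deriv_slice]

noncomputable def Ff (c : ℕ) (μ ν : ℝ) (f g : SchwartzMap (ℝ × ℝ) ℂ) (x : ℝ) (p : ℤ)
    (k : ℤ) (t : ℝ) : ℂ :=
  Complex.exp (2 * (π : ℂ) * Complex.I *
      (-((c : ℂ) * (k : ℂ) * (p : ℂ) * ((t : ℂ) - (p : ℂ) * (ν : ℂ)))))
    * f (x + (k : ℝ), t) * (starRingEnd ℂ) (g (x - 2 * (p : ℝ) * μ + (k : ℝ), t - 2 * (p : ℝ) * ν))

noncomputable def Ff' (c : ℕ) (μ ν : ℝ) (f g : SchwartzMap (ℝ × ℝ) ℂ) (x : ℝ) (p : ℤ)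
    (k : ℤ) (t : ℝ) : ℂ :=
  (-(2 * (π : ℂ) * Complex.I * (c : ℂ) * (k : ℂ) * (p : ℂ))) * Ff c μ ν f g x p k t
    + Complex.exp (2 * (π : ℂ) * Complex.I *
        (-((c : ℂ) * (k : ℂ) * (p : ℂ) * ((t : ℂ) - (p : ℂ) * (ν : ℂ)))))
      * D1 f (x + (k : ℝ)) t
      * (starRingEnd ℂ) (g (x - 2 * (p : ℝ) * μ + (k : ℝ), t - 2 * (p : ℝ) * ν))
    + Complex.exp (2 * (π : ℂ) * Complex.I *
        (-((c : ℂ) * (k : ℂ) * (p : ℂ) * ((t : ℂ) - (p : ℂ) * (ν : ℂ)))))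
      * f (x + (k : ℝ), t)
      * (starRingEnd ℂ) (D1 g (x - 2 * (p : ℝ) * μ + (k : ℝ)) (t - 2 * (p : ℝ) * ν))

lemma hasDerivAt_Ff (c : ℕ) (μ ν : ℝ) (f g : SchwartzMap (ℝ × ℝ) ℂ) (x : ℝ) (p : ℤ)
    (k : ℤ) (t : ℝ) :
    HasDerivAt (Ff c μ ν f g x p k) (Ff' c μ ν f g x p k t) t := by
  have hinner : HasDerivAt (fun r : ℝ => 2 * (π : ℂ) * Complex.I *
      (-((c : ℂ) * (k : ℂ) * (p : ℂ) * ((r : ℂ) - (p : ℂ) * (ν : ℂ)))))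
      (2 * (π : ℂ) * Complex.I * (-((c : ℂ) * (k : ℂ) * (p : ℂ) * 1))) t :=
    (((Complex.ofRealCLM.hasDerivAt.sub_const ((p : ℂ) * (ν : ℂ))).const_mul
      ((c : ℂ) * (k : ℂ) * (p : ℂ))).neg.const_mul (2 * (π : ℂ) * Complex.I))
  have hE := hinner.cexp
  have hf := hasDerivAt_slice f (x + (k : ℝ)) t
  have hgin : HasDerivAt (fun r : ℝ => r - 2 * (p : ℝ) * ν) 1 t :=
    (hasDerivAt_id t).sub_const _
  have hg1 := hasDerivAt_slice g (x - 2 * (p : ℝ) * μ + (k : ℝ)) (t - 2 * (p : ℝ) * ν)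
  have hg2 : HasDerivAt (fun r : ℝ => g (x - 2 * (p : ℝ) * μ + (k : ℝ), r - 2 * (p : ℝ) * ν))
      (D1 g (x - 2 * (p : ℝ) * μ + (k : ℝ)) (t - 2 * (p : ℝ) * ν)) t := by
    simpa [Function.comp_def] using HasDerivAt.scomp t hg1 hgin
  have hg3 : HasDerivAt (fun r : ℝ =>
      (starRingEnd ℂ) (g (x - 2 * (p : ℝ) * μ + (k : ℝ), r - 2 * (p : ℝ) * ν)))
      ((starRingEnd ℂ) (D1 g (x - 2 * (p : ℝ) * μ + (k : ℝ)) (t - 2 * (p : ℝ) * ν))) t := by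
    have := ((Complex.conjCLE.toContinuousLinearMap).hasFDerivAt).comp_hasDerivAt t hg2
    simpa [Complex.conjCLE_apply, Function.comp_def] using this
  have := (hE.mul hf).mul hg3
  rw [Ff']
  convert this using 1
  · rfl
  · rfl
  simp only [Ff, Pi.mul_apply]; ring

lemma norm_E (c : ℕ) (ν : ℝ) (p k : ℤ) (t : ℝ) :
    ‖Complex.exp (2 * (π : ℂ) * Complex.I *
      (-((c : ℂ) * (k : ℂ) * (p : ℂ) * ((t : ℂ) - (p : ℂ) * (ν : ℂ)))))‖ = 1 := by
  have harg : (2 * (π : ℂ) * Complex.I *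
      (-((c : ℂ) * (k : ℂ) * (p : ℂ) * ((t : ℂ) - (p : ℂ) * (ν : ℂ)))))
      = ((↑(-(2 * π * c * k * p * (t - p * ν))) : ℂ)) * Complex.I := by
    push_cast; ring
  rw [harg, Complex.norm_exp_ofReal_mul_I]

lemma div_pow_le_div_pow {C a : ℝ} (hC : 0 ≤ C) {m n : ℕ} (hmn : m ≤ n) :
    C / (1 + |a|) ^ n ≤ C / (1 + |a|) ^ m := by
  have h1 : (1 : ℝ) ≤ 1 + |a| := by linarith [abs_nonneg a]
  gcongr

/-- Bound on `nablaY` of a Schwartz function with decay constant `C`. -/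
lemma nabla_bound (c : ℕ) (μ : ℝ) {C : ℝ} (hC : 0 ≤ C) (h : SchwartzMap (ℝ × ℝ) ℂ)
    (hd : ∀ a t : ℝ, ‖h (a, t)‖ ≤ C / (1 + |a|) ^ 5 ∧
      ‖fderiv ℝ h ((a, t) : ℝ × ℝ) ((0 : ℝ), (1 : ℝ))‖ ≤ C / (1 + |a|) ^ 5) (s t : ℝ) :
    ‖nablaY c μ (fun a b => h (a, b)) s t‖
      ≤ (1 + π * c / (2 * |μ|)) * C / (1 + |s|) ^ 3 := by
  have h1 : (1 : ℝ) ≤ 1 + |s| := by linarith [abs_nonneg s]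
  rw [nabla_eq]
  have hK : ‖(π : ℂ) * (c : ℂ) * Complex.I / (2 * (μ : ℂ)) * (s : ℂ) ^ 2 * h (s, t)‖
      = π * c / (2 * |μ|) * s ^ 2 * ‖h (s, t)‖ := by
    rw [show (π : ℂ) * (c : ℂ) * Complex.I / (2 * (μ : ℂ)) * (s : ℂ) ^ 2 * h (s, t)
        = Complex.ofReal (π * (c : ℝ) / (2 * μ) * s ^ 2) * Complex.I * h (s, t) from by
      push_cast; ring]
    rw [norm_mul, norm_mul, Complex.norm_real, Complex.norm_I, mul_one, Real.norm_eq_abs]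
    congr 1
    rw [abs_mul, abs_div, abs_mul, abs_mul, abs_two, abs_of_nonneg pi_pos.le,
      abs_of_nonneg (sq_nonneg s), Nat.abs_cast]
  have hs2 : s ^ 2 ≤ (1 + |s|) ^ 2 := by nlinarith [abs_nonneg s, sq_abs s]
  have hcollapse : (1 + |s|) ^ 2 * (C / (1 + |s|) ^ 5) = C / (1 + |s|) ^ 3 := by
    rw [eq_div_iff (by positivity : ((1:ℝ) + |s|) ^ 3 ≠ 0)]
    field_simp
  have hterm2 : π * c / (2 * |μ|) * s ^ 2 * ‖h (s, t)‖
      ≤ π * c / (2 * |μ|) * (C / (1 + |s|) ^ 3) := by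
    rw [mul_assoc, ← hcollapse]
    refine mul_le_mul_of_nonneg_left ?_ (by positivity)
    exact mul_le_mul hs2 (hd s t).1 (norm_nonneg _) (by positivity)
  calc ‖-D1 h s t + (π : ℂ) * (c : ℂ) * Complex.I / (2 * (μ : ℂ)) * (s : ℂ) ^ 2 * h (s, t)‖
      ≤ ‖D1 h s t‖ + ‖(π : ℂ) * (c : ℂ) * Complex.I / (2 * (μ : ℂ)) * (s : ℂ) ^ 2 * h (s, t)‖ :=
        (norm_add_le _ _).trans_eq (by rw [norm_neg])
    _ = ‖D1 h s t‖ + π * c / (2 * |μ|) * s ^ 2 * ‖h (s, t)‖ := by rw [hK]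
    _ ≤ C / (1 + |s|) ^ 3 + π * c / (2 * |μ|) * (C / (1 + |s|) ^ 3) :=
        add_le_add (le_trans (hd s t).2 (div_pow_le_div_pow hC (by norm_num))) hterm2
    _ = (1 + π * c / (2 * |μ|)) * C / (1 + |s|) ^ 3 := by ring

lemma decay_le_const {C a : ℝ} (hC : 0 ≤ C) {n : ℕ} : C / (1 + |a|) ^ n ≤ C :=
  le_trans (div_pow_le_div_pow hC (Nat.zero_le n)) (by simp)

/-- ∇⁰_Y is compatible with the module-valued inner product:
⟨∇⁰_Y f, g⟩ + ⟨f, ∇⁰_Y g⟩ = δ_Y(⟨f,g⟩). -/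
theorem stmt6 (c : ℕ) (hc : 0 < c) (μ ν : ℝ) (hμ : μ ≠ 0) (hν : ν ≠ 0)
    (f g : SchwartzMap (ℝ × ℝ) ℂ) :
    ∀ (x y : ℝ) (p : ℤ),
      ip c μ ν (nablaY c μ (fun a b => f (a, b))) (fun a b => g (a, b)) x y p
          + ip c μ ν (fun a b => f (a, b)) (nablaY c μ (fun a b => g (a, b))) x y p
        = deltaY c μ (ip c μ ν (fun a b => f (a, b)) (fun a b => g (a, b))) x y p := by
  intro x y p
  obtain ⟨Cf, hCf0, hdf⟩ := schwartz_decay f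
  obtain ⟨Cg, hCg0, hdg⟩ := schwartz_decay g
  have hμ' : (μ : ℂ) ≠ 0 := Complex.ofReal_ne_zero.mpr hμ
  have hf3 : ∀ a t : ℝ, ‖f (a, t)‖ ≤ Cf / (1 + |a|) ^ 3 :=
    fun a t => le_trans (hdf a t).1 (div_pow_le_div_pow hCf0 (by norm_num))
  have hfD3 : ∀ a t : ℝ, ‖D1 f a t‖ ≤ Cf / (1 + |a|) ^ 3 :=
    fun a t => le_trans (hdf a t).2 (div_pow_le_div_pow hCf0 (by norm_num))
  have hgC : ∀ a t : ℝ, ‖g (a, t)‖ ≤ Cg := fun a t => le_trans (hdg a t).1 (decay_le_const hCg0)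
  have hgDC : ∀ a t : ℝ, ‖D1 g a t‖ ≤ Cg := fun a t => le_trans (hdg a t).2 (decay_le_const hCg0)
  have hK1 : ∀ k : ℤ, (1 : ℝ) ≤ 1 + |(k : ℝ)| := fun k => by linarith [abs_nonneg ((k : ℝ))]
  have hcu : ∀ (M : ℝ), 0 ≤ M → ∀ k : ℤ,
      M / (1 + |x + (k : ℝ)|) ^ 3 ≤ M * ((1 + |(k : ℝ)|) / (1 + |x + (k : ℝ)|) ^ 3) := by
    intro M hM k
    rw [mul_div_assoc']
    gcongr
    exact le_mul_of_one_le_right hM (hK1 k)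
  -- bound on Ff
  have hFfb : ∀ (k : ℤ) (t : ℝ), ‖Ff c μ ν f g x p k t‖ ≤ Cf * Cg / (1 + |x + (k : ℝ)|) ^ 3 := by
    intro k t
    rw [Ff, norm_mul, norm_mul, norm_E, one_mul, RCLike.norm_conj]
    calc ‖f (x + (k : ℝ), t)‖ * ‖g (x - 2 * (p : ℝ) * μ + (k : ℝ), t - 2 * (p : ℝ) * ν)‖
        ≤ (Cf / (1 + |x + (k : ℝ)|) ^ 3) * Cg :=
          mul_le_mul (hf3 _ _) (hgC _ _) (norm_nonneg _) (by positivity)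
      _ = Cf * Cg / (1 + |x + (k : ℝ)|) ^ 3 := by ring
  -- bound on Ff'
  have hFf'b : ∀ (k : ℤ) (t : ℝ), ‖Ff' c μ ν f g x p k t‖
      ≤ (2 * π * c * |(p : ℝ)| + 2) * (Cf * Cg)
        * ((1 + |(k : ℝ)|) / (1 + |x + (k : ℝ)|) ^ 3) := by
    intro k t
    have hQ0 : (0 : ℝ) ≤ Cf * Cg / (1 + |x + (k : ℝ)|) ^ 3 := by positivity
    have hw : ‖(-(2 * (π : ℂ) * Complex.I * (c : ℂ) * (k : ℂ) * (p : ℂ)))‖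
        = 2 * π * c * |(k : ℝ)| * |(p : ℝ)| := by
      rw [show (-(2 * (π : ℂ) * Complex.I * (c : ℂ) * (k : ℂ) * (p : ℂ)))
          = Complex.ofReal (-(2 * π * c * (k : ℝ) * (p : ℝ))) * Complex.I from by
        push_cast; ring]
      rw [norm_mul, Complex.norm_real, Complex.norm_I, mul_one, Real.norm_eq_abs, abs_neg,
        abs_mul, abs_mul, abs_mul, abs_of_nonneg (by positivity : (0:ℝ) ≤ 2 * π), Nat.abs_cast]
    have h1 : ‖(-(2 * (π : ℂ) * Complex.I * (c : ℂ) * (k : ℂ) * (p : ℂ)))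
          * Ff c μ ν f g x p k t‖
        ≤ (2 * π * c * |(p : ℝ)| * (1 + |(k : ℝ)|)) * (Cf * Cg / (1 + |x + (k : ℝ)|) ^ 3) := by
      rw [norm_mul, hw]
      apply mul_le_mul _ (hFfb k t) (norm_nonneg _) (by positivity)
      nlinarith [abs_nonneg ((k : ℝ)), abs_nonneg ((p : ℝ)), pi_pos.le,
        mul_nonneg (mul_nonneg (mul_nonneg (by norm_num : (0:ℝ) ≤ 2) pi_pos.le)
          (Nat.cast_nonneg c : (0:ℝ) ≤ c)) (abs_nonneg ((p : ℝ)))]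
    have h2 : ‖Complex.exp (2 * (π : ℂ) * Complex.I *
          (-((c : ℂ) * (k : ℂ) * (p : ℂ) * ((t : ℂ) - (p : ℂ) * (ν : ℂ)))))
          * D1 f (x + (k : ℝ)) t
          * (starRingEnd ℂ) (g (x - 2 * (p : ℝ) * μ + (k : ℝ), t - 2 * (p : ℝ) * ν))‖
        ≤ Cf * Cg / (1 + |x + (k : ℝ)|) ^ 3 := by
      rw [norm_mul, norm_mul, norm_E, one_mul, RCLike.norm_conj]
      calc ‖D1 f (x + (k : ℝ)) t‖ * ‖g (x - 2 * (p : ℝ) * μ + (k : ℝ), t - 2 * (p : ℝ) * ν)‖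
          ≤ (Cf / (1 + |x + (k : ℝ)|) ^ 3) * Cg :=
            mul_le_mul (hfD3 _ _) (hgC _ _) (norm_nonneg _) (by positivity)
        _ = Cf * Cg / (1 + |x + (k : ℝ)|) ^ 3 := by ring
    have h3 : ‖Complex.exp (2 * (π : ℂ) * Complex.I *
          (-((c : ℂ) * (k : ℂ) * (p : ℂ) * ((t : ℂ) - (p : ℂ) * (ν : ℂ)))))
          * f (x + (k : ℝ), t)
          * (starRingEnd ℂ) (D1 g (x - 2 * (p : ℝ) * μ + (k : ℝ)) (t - 2 * (p : ℝ) * ν))‖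
        ≤ Cf * Cg / (1 + |x + (k : ℝ)|) ^ 3 := by
      rw [norm_mul, norm_mul, norm_E, one_mul, RCLike.norm_conj]
      calc ‖f (x + (k : ℝ), t)‖ * ‖D1 g (x - 2 * (p : ℝ) * μ + (k : ℝ)) (t - 2 * (p : ℝ) * ν)‖
          ≤ (Cf / (1 + |x + (k : ℝ)|) ^ 3) * Cg :=
            mul_le_mul (hf3 _ _) (hgDC _ _) (norm_nonneg _) (by positivity)
        _ = Cf * Cg / (1 + |x + (k : ℝ)|) ^ 3 := by ring
    rw [Ff']
    refine le_trans (norm_add_le _ _) (le_trans (add_le_add_left (norm_add_le _ _) _) ?_)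
    refine le_trans (add_le_add (add_le_add h1 h2) h3) ?_
    have hKk := hK1 k
    have hp0 : (0 : ℝ) ≤ 2 * π * c * |(p : ℝ)| := by positivity
    rw [show (2 * π * c * |(p : ℝ)| + 2) * (Cf * Cg)
        * ((1 + |(k : ℝ)|) / (1 + |x + (k : ℝ)|) ^ 3)
        = (2 * π * c * |(p : ℝ)| + 2) * (1 + |(k : ℝ)|)
          * (Cf * Cg / (1 + |x + (k : ℝ)|) ^ 3) from by ring]
    nlinarith [mul_nonneg hp0 hQ0, mul_le_mul_of_nonneg_left hKk hQ0]
  -- summabilities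
  have hSF : Summable (fun k : ℤ => Ff c μ ν f g x p k y) :=
    summable_of_le_aux (x := x) (M := Cf * Cg)
      (fun k => le_trans (hFfb k y) (hcu _ (by positivity) k))
  have hSF' : Summable (fun k : ℤ => Ff' c μ ν f g x p k y) :=
    summable_of_le_aux (x := x) (M := (2 * π * c * |(p : ℝ)| + 2) * (Cf * Cg))
      (fun k => hFf'b k y)
  -- derivative of the sum
  have hder : HasDerivAt (fun t => ∑' k : ℤ, Ff c μ ν f g x p k t)
      (∑' k : ℤ, Ff' c μ ν f g x p k y) y :=
    hasDerivAt_tsum (u := fun k : ℤ => (2 * π * c * |(p : ℝ)| + 2) * (Cf * Cg)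
        * ((1 + |(k : ℝ)|) / (1 + |x + (k : ℝ)|) ^ 3))
      ((summable_aux x).mul_left _) (fun k t => hasDerivAt_Ff c μ ν f g x p k t)
      (fun k t => hFf'b k t) hSF y
  -- summability of the two inner-product series
  have hSG : Summable (fun k : ℤ => Complex.exp (2 * (π : ℂ) * Complex.I *
        (-((c : ℂ) * (k : ℂ) * (p : ℂ) * ((y : ℂ) - (p : ℂ) * (ν : ℂ)))))
      * nablaY c μ (fun a b => f (a, b)) (x + (k : ℝ)) y
      * (starRingEnd ℂ) (g (x - 2 * (p : ℝ) * μ + (k : ℝ), y - 2 * (p : ℝ) * ν))) := by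
    apply summable_of_le_aux (x := x) (M := (1 + π * c / (2 * |μ|)) * Cf * Cg)
    intro k
    rw [norm_mul, norm_mul, norm_E, one_mul, RCLike.norm_conj]
    calc ‖nablaY c μ (fun a b => f (a, b)) (x + (k : ℝ)) y‖
          * ‖g (x - 2 * (p : ℝ) * μ + (k : ℝ), y - 2 * (p : ℝ) * ν)‖
        ≤ ((1 + π * c / (2 * |μ|)) * Cf / (1 + |x + (k : ℝ)|) ^ 3) * Cg :=
          mul_le_mul (nabla_bound c μ hCf0 f hdf _ _) (hgC _ _) (norm_nonneg _) (by positivity)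
      _ = (1 + π * c / (2 * |μ|)) * Cf * Cg / (1 + |x + (k : ℝ)|) ^ 3 := by ring
      _ ≤ _ := hcu _ (by positivity) k
  have hSH : Summable (fun k : ℤ => Complex.exp (2 * (π : ℂ) * Complex.I *
        (-((c : ℂ) * (k : ℂ) * (p : ℂ) * ((y : ℂ) - (p : ℂ) * (ν : ℂ)))))
      * f (x + (k : ℝ), y)
      * (starRingEnd ℂ) (nablaY c μ (fun a b => g (a, b)) (x - 2 * (p : ℝ) * μ + (k : ℝ))
          (y - 2 * (p : ℝ) * ν))) := by
    apply summable_of_le_aux (x := x) (M := Cf * ((1 + π * c / (2 * |μ|)) * Cg))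
    intro k
    rw [norm_mul, norm_mul, norm_E, one_mul, RCLike.norm_conj]
    have hnb : ‖nablaY c μ (fun a b => g (a, b)) (x - 2 * (p : ℝ) * μ + (k : ℝ))
        (y - 2 * (p : ℝ) * ν)‖ ≤ (1 + π * c / (2 * |μ|)) * Cg :=
      le_trans (nabla_bound c μ hCg0 g hdg _ _) (decay_le_const (by positivity))
    calc ‖f (x + (k : ℝ), y)‖ * ‖nablaY c μ (fun a b => g (a, b))
          (x - 2 * (p : ℝ) * μ + (k : ℝ)) (y - 2 * (p : ℝ) * ν)‖
        ≤ (Cf / (1 + |x + (k : ℝ)|) ^ 3) * ((1 + π * c / (2 * |μ|)) * Cg) :=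
          mul_le_mul (hf3 _ _) hnb (norm_nonneg _) (by positivity)
      _ = Cf * ((1 + π * c / (2 * |μ|)) * Cg) / (1 + |x + (k : ℝ)|) ^ 3 := by ring
      _ ≤ _ := hcu _ (by positivity) k
  -- the pointwise algebraic identity
  have hkey : ∀ k : ℤ, Complex.exp (2 * (π : ℂ) * Complex.I *
        (-((c : ℂ) * (k : ℂ) * (p : ℂ) * ((y : ℂ) - (p : ℂ) * (ν : ℂ)))))
      * nablaY c μ (fun a b => f (a, b)) (x + (k : ℝ)) y
      * (starRingEnd ℂ) (g (x - 2 * (p : ℝ) * μ + (k : ℝ), y - 2 * (p : ℝ) * ν))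
    + Complex.exp (2 * (π : ℂ) * Complex.I *
        (-((c : ℂ) * (k : ℂ) * (p : ℂ) * ((y : ℂ) - (p : ℂ) * (ν : ℂ)))))
      * f (x + (k : ℝ), y)
      * (starRingEnd ℂ) (nablaY c μ (fun a b => g (a, b)) (x - 2 * (p : ℝ) * μ + (k : ℝ))
          (y - 2 * (p : ℝ) * ν))
    = -(Ff' c μ ν f g x p k y)
      + 2 * (π : ℂ) * Complex.I * (c : ℂ) * (p : ℂ) * ((x : ℂ) - (p : ℂ) * (μ : ℂ))
        * Ff c μ ν f g x p k y := by
    intro k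
    rw [nabla_eq, nabla_eq, Ff', Ff]
    simp only [map_add, map_neg, map_mul, map_div₀, map_pow, Complex.conj_ofReal,
      Complex.conj_I, map_natCast, map_ofNat]
    push_cast
    field_simp
    ring
  -- assemble
  have hip_eq : (fun t => ip c μ ν (fun a b => f (a, b)) (fun a b => g (a, b)) x t p)
      = fun t => ∑' k : ℤ, Ff c μ ν f g x p k t := rfl
  calc ip c μ ν (nablaY c μ (fun a b => f (a, b))) (fun a b => g (a, b)) x y p
        + ip c μ ν (fun a b => f (a, b)) (nablaY c μ (fun a b => g (a, b))) x y p
      = ∑' k : ℤ, (Complex.exp (2 * (π : ℂ) * Complex.I *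
            (-((c : ℂ) * (k : ℂ) * (p : ℂ) * ((y : ℂ) - (p : ℂ) * (ν : ℂ)))))
          * nablaY c μ (fun a b => f (a, b)) (x + (k : ℝ)) y
          * (starRingEnd ℂ) (g (x - 2 * (p : ℝ) * μ + (k : ℝ), y - 2 * (p : ℝ) * ν))
        + Complex.exp (2 * (π : ℂ) * Complex.I *
            (-((c : ℂ) * (k : ℂ) * (p : ℂ) * ((y : ℂ) - (p : ℂ) * (ν : ℂ)))))
          * f (x + (k : ℝ), y)
          * (starRingEnd ℂ) (nablaY c μ (fun a b => g (a, b))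
              (x - 2 * (p : ℝ) * μ + (k : ℝ)) (y - 2 * (p : ℝ) * ν))) :=
        (Summable.tsum_add hSG hSH).symm
    _ = ∑' k : ℤ, (-(Ff' c μ ν f g x p k y)
          + 2 * (π : ℂ) * Complex.I * (c : ℂ) * (p : ℂ) * ((x : ℂ) - (p : ℂ) * (μ : ℂ))
            * Ff c μ ν f g x p k y) := tsum_congr hkey
    _ = (∑' k : ℤ, -(Ff' c μ ν f g x p k y))
          + ∑' k : ℤ, 2 * (π : ℂ) * Complex.I * (c : ℂ) * (p : ℂ)
            * ((x : ℂ) - (p : ℂ) * (μ : ℂ)) * Ff c μ ν f g x p k y :=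
        Summable.tsum_add hSF'.neg (hSF.mul_left _)
    _ = -(∑' k : ℤ, Ff' c μ ν f g x p k y)
          + 2 * (π : ℂ) * Complex.I * (c : ℂ) * (p : ℂ) * ((x : ℂ) - (p : ℂ) * (μ : ℂ))
            * (∑' k : ℤ, Ff c μ ν f g x p k y) := by rw [tsum_neg, tsum_mul_left]
    _ = deltaY c μ (ip c μ ν (fun a b => f (a, b)) (fun a b => g (a, b))) x y p := by
        rw [deltaY]
        have hd2 : deriv (fun t => ip c μ ν (fun a b => f (a, b)) (fun a b => g (a, b)) x t p) y
            = ∑' k : ℤ, Ff' c μ ν f g x p k y := by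
          rw [hip_eq]; exact hder.deriv
        rw [hd2]
        rfl
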